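/- Let $T_1, T_2, T_3 > 0$ be real numbers. Then there exists a unique real number $p > 0$ such that $\frac{p}{p+T_1} + \frac{p}{p+T_2} + \frac{p}{p+T_3} = 1$. -/

import Mathlib

theorem stmt_0 (T1 T2 T3 : ℝ) (h1 : 0 < T1) (h2 : 0 < T2) (h3 : 0 < T3) :
    ∃! p : ℝ, 0 < p ∧ p / (p + T1) + p / (p + T2) + p / (p + T3) = 1 := by
  set f : ℝ → ℝ := fun p => p / (p + T1) + p / (p + T2) + p / (p + T3) with hf
  have mono : ∀ a b : ℝ, 0 ≤ a → a < b → f a < f b := by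
    intro a b ha hab
    have key : ∀ T : ℝ, 0 < T → a / (a + T) < b / (b + T) := by
      intro T hT
      rw [div_lt_div_iff₀ (by linarith) (by linarith)]
      nlinarith
    exact add_lt_add (add_lt_add (key T1 h1) (key T2 h2)) (key T3 h3)
  have hcont : ContinuousOn f (Set.Icc 0 (T1 + T2 + T3)) := by
    have hterm : ∀ T : ℝ, 0 < T →
        ContinuousOn (fun p : ℝ => p / (p + T)) (Set.Icc 0 (T1 + T2 + T3)) := by
      intro T hT
      apply ContinuousOn.div continuous_id.continuousOn
        ((continuous_id.add continuous_const).continuousOn)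
      intro x hx
      have := hx.1
      show x + T ≠ 0
      linarith
    exact ((hterm T1 h1).add (hterm T2 h2)).add (hterm T3 h3)
  have hS : (0:ℝ) ≤ T1 + T2 + T3 := by linarith
  have hf0 : f 0 = 0 := by simp [hf]
  have hfS : (1:ℝ) ≤ f (T1 + T2 + T3) := by
    have key : ∀ T : ℝ, 0 < T → T ≤ T1 + T2 + T3 →
        (1:ℝ)/2 ≤ (T1 + T2 + T3) / ((T1 + T2 + T3) + T) := by
      intro T hT hTle
      rw [le_div_iff₀ (by linarith)]
      linarith
    have k1 := key T1 h1 (by linarith)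
    have k2 := key T2 h2 (by linarith)
    have k3 := key T3 h3 (by linarith)
    simp only [hf]
    linarith
  have hmem : (1:ℝ) ∈ Set.Icc (f 0) (f (T1 + T2 + T3)) := ⟨by rw [hf0]; norm_num, hfS⟩
  obtain ⟨c, hc, hfc⟩ := intermediate_value_Icc hS hcont hmem
  have hcpos : 0 < c := by
    rcases lt_or_eq_of_le hc.1 with h | h
    · exact h
    · exfalso; rw [← h] at hfc; rw [hf0] at hfc; norm_num at hfc
  refine ⟨c, ⟨hcpos, hfc⟩, ?_⟩
  rintro y ⟨hy, hfy⟩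
  by_contra hne
  rcases lt_or_gt_of_ne hne with h | h
  · have := mono y c hy.le h
    simp only [hf] at this hfc; rw [hfy, hfc] at this; exact lt_irrefl _ this
  · have := mono c y hcpos.le h
    simp only [hf] at this hfc; rw [hfy, hfc] at this; exact lt_irrefl _ this
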